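/- Let (X, dist) be a metric space, let z ≥ 1 be an integer, let c ≥ 0 and r > 0 be reals, let p, γ, x ∈ X, and let C ⊆ X be finite and nonempty. Assume dist(γ, x) ≤ r/2, dist(γ, C) ≤ (2c+1)·r, and dist(p, x) ≤ r. Then dist(p, C)^z ≤ (16c+24)^z · ( dist(p, γ)^z + (r − dist(p, x))^z ). -/
import Mathlib


/-- **Cost of an inner point of an optimal cluster.** Let `(X, dist)` be a metric
space, `z ≥ 1` an integer, `c ≥ 0` and `r > 0` reals, `p, γ, x ∈ X` and `C ⊆ X` finite
and nonempty.  Assume `dist(γ, x) ≤ r/2`, `dist(γ, C) ≤ (2c+1)·r` and `dist(p, x) ≤ r`.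
Then `dist(p, C)^z ≤ (16c+24)^z · (dist(p, γ)^z + (r − dist(p, x))^z)`. -/
theorem inner_point_cost_bound {X : Type*} [MetricSpace X]
    (z : ℕ) (hz : 1 ≤ z) (c r : ℝ) (hc : 0 ≤ c) (hr : 0 < r)
    (p γ x : X) (C : Finset X) (hC : C.Nonempty)
    (hγx : dist γ x ≤ r / 2)
    (hγC : Metric.infDist γ (↑C : Set X) ≤ (2 * c + 1) * r)
    (hpx : dist p x ≤ r) :
    Metric.infDist p (↑C : Set X) ^ z
      ≤ (16 * c + 24) ^ z * (dist p γ ^ z + (r - dist p x) ^ z) := by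
  set a := dist p γ with ha_def
  set b := r - dist p x with hb_def
  have ha : 0 ≤ a := dist_nonneg
  have hb : 0 ≤ b := by simp [hb_def]; linarith
  have htri : dist p x ≤ a + dist γ x := by
    have := dist_triangle p γ x
    simpa [ha_def] using this
  have hS : r ≤ 2 * (a + b) := by
    have : dist p x - r / 2 ≤ a := by linarith
    simp only [hb_def]; linarith
  have hinf : Metric.infDist p (↑C : Set X) ≤ (8 * c + 6) * (a + b) := by
    have h2 := Metric.infDist_le_infDist_add_dist (x := p) (y := γ) (s := (↑C : Set X))
    have hcr : c * r ≤ c * (2 * (a + b)) := by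
      exact mul_le_mul_of_nonneg_left hS hc
    rw [← ha_def] at h2
    nlinarith
  have hinf0 : 0 ≤ Metric.infDist p (↑C : Set X) := Metric.infDist_nonneg
  have h3 : Metric.infDist p (↑C : Set X) ^ z ≤ ((8 * c + 6) * (a + b)) ^ z :=
    pow_le_pow_left₀ hinf0 hinf z
  have h4 : (a + b) ^ z ≤ 2 ^ z * (a ^ z + b ^ z) := by
    calc (a + b) ^ z ≤ 2 ^ (z - 1) * (a ^ z + b ^ z) := add_pow_le ha hb z
      _ ≤ 2 ^ z * (a ^ z + b ^ z) := by
          apply mul_le_mul_of_nonneg_right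
          · exact pow_le_pow_right₀ (by norm_num) (Nat.sub_le z 1)
          · positivity
  have hnn : (0:ℝ) ≤ 8 * c + 6 := by linarith
  calc Metric.infDist p (↑C : Set X) ^ z
      ≤ ((8 * c + 6) * (a + b)) ^ z := h3
    _ = (8 * c + 6) ^ z * (a + b) ^ z := mul_pow _ _ _
    _ ≤ (8 * c + 6) ^ z * (2 ^ z * (a ^ z + b ^ z)) := by
        apply mul_le_mul_of_nonneg_left h4 (by positivity)
    _ = (16 * c + 12) ^ z * (a ^ z + b ^ z) := by
        rw [← mul_assoc, ← mul_pow]; ring_nf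
    _ ≤ (16 * c + 24) ^ z * (a ^ z + b ^ z) := by
        apply mul_le_mul_of_nonneg_right _ (by positivity)
        exact pow_le_pow_left₀ (by linarith) (by linarith) z
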